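/- Let t = (x_A, x_D', x_C', x_B', x_A')₀ and t' = (x_D', x_C', x_B', x_A', x_D'')₀ be the tagged pentatopes assigned to the top pentatope of a prism and the bottom pentatope of the next prism over the same tetrahedron (vertices at three consecutive time levels). Then after one bisection, the child (x_A', z, x_B', x_C', x_D')₁ of t and the child (x_D', z', x_C', x_B', x_A')₁ of t' are reflected neighbors, where z, z' are the respective edge midpoints. -/

import Mathlib

/-- A tagged pentatope: an ordered 5-tuple of vertices together with a type γ ∈ {0,1,2,3}. -/
structure TP (V : Type*) where
  v : Fin 5 → V
  γ : Fin 4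

/-- The vertex permutation used in Stevenson's reflection, depending on the type. -/
def refPerm (γ : Fin 4) : Fin 5 → Fin 5 :=
  if γ = 0 then ![4, 3, 2, 1, 0]
  else if γ = 1 then ![4, 1, 3, 2, 0]
  else ![4, 1, 2, 3, 0]

/-- The reflection of a tagged pentatope. -/
def TP.reflect {V : Type*} (t : TP V) : TP V := ⟨t.v ∘ refPerm t.γ, t.γ⟩

variable {V : Type*} [AddCommGroup V] [Module ℝ V]

/-- The midpoint x' = (x₀ + x₄)/2 of the refinement edge. -/
noncomputable def TP.mid (t : TP V) : V := midpoint ℝ (t.v 0) (t.v 4)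

/-- First child of the bisection rule. -/
noncomputable def TP.child1 (t : TP V) : TP V :=
  ⟨![t.v 0, t.mid, t.v 1, t.v 2, t.v 3], t.γ + 1⟩

/-- Second child of the bisection rule. -/
noncomputable def TP.child2 (t : TP V) : TP V :=
  ⟨if t.γ = 0 then ![t.v 4, t.mid, t.v 3, t.v 2, t.v 1]
    else if t.γ = 1 then ![t.v 4, t.mid, t.v 1, t.v 3, t.v 2]
    else ![t.v 4, t.mid, t.v 1, t.v 2, t.v 3], t.γ + 1⟩

/-- Two vertex orderings agree in all but (at most) one position. -/
def agreeButOne {V : Type*} (u w : Fin 5 → V) : Prop :=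
  ∃ i : Fin 5, ∀ j : Fin 5, j ≠ i → u j = w j

/-- Reflected neighbors: same type, share a hyperface (four common vertices), and the
vertex order of t' matches that of t or of its reflection t_R in all but one
position. -/
def ReflNbr {V : Type*} (t t' : TP V) : Prop :=
  t.γ = t'.γ ∧ (Set.range t.v ∩ Set.range t'.v).encard = 4 ∧
    (agreeButOne t.v t'.v ∨ agreeButOne t.reflect.v t'.v)

/-- ψ_t : ℝ³ → ℝ⁴, appending the coordinate t. -/
def lift (t : ℝ) (x : Fin 3 → ℝ) : Fin 4 → ℝ := Fin.snoc x t

/-- For the top pentatope t = (x_A,x_D',x_C',x_B',x_A')₀ of one prism and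
the bottom pentatope t' = (x_D',x_C',x_B',x_A',x_D'')₀ of the next prism over the same
tetrahedron (three consecutive time levels r < s < u), after one bisection the child
(x_A',z,x_B',x_C',x_D')₁ of t and the child (x_D',z',x_C',x_B',x_A')₁ of t' are
reflected neighbors. -/
lemma lift_inj {t t' : ℝ} {x y : Fin 3 → ℝ} (h : lift t x = lift t' y) :
    t = t' ∧ x = y := by
  constructor
  · have := congrFun h (Fin.last 3)
    simpa only [lift, Fin.snoc_last] using this
  · funext i
    have := congrFun h i.castSucc
    simpa [lift] using this

lemma lift_ne_of_ne_t {t t' : ℝ} {x y : Fin 3 → ℝ} (h : t ≠ t') :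
    lift t x ≠ lift t' y := fun he => h (lift_inj he).1

lemma lift_ne_of_ne_x {t t' : ℝ} {x y : Fin 3 → ℝ} (h : x ≠ y) :
    lift t x ≠ lift t' y := fun he => h (lift_inj he).2

lemma midpoint_lift (r s : ℝ) (x : Fin 3 → ℝ) :
    midpoint ℝ (lift r x) (lift s x) = lift ((r + s) / 2) x := by
  funext i
  rw [pi_midpoint_apply]
  refine Fin.lastCases ?_ ?_ i
  · simp only [lift, Fin.snoc_last, midpoint_eq_smul_add, smul_eq_mul, invOf_eq_inv]; ring
  · intro j; simp [lift]

lemma range5 {α : Type*} (p0 p1 p2 p3 p4 : α) :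
    Set.range ![p0, p1, p2, p3, p4] = {p0, p1, p2, p3, p4} := by
  ext x
  simp only [Matrix.range_cons, Matrix.range_empty, Set.union_empty, Set.mem_union,
    Set.mem_singleton_iff, Set.mem_insert_iff]

lemma encard4 {α : Type*} {p1 p2 p3 p4 : α} (h12 : p1 ≠ p2) (h13 : p1 ≠ p3)
    (h14 : p1 ≠ p4) (h23 : p2 ≠ p3) (h24 : p2 ≠ p4) (h34 : p3 ≠ p4) :
    ({p1, p2, p3, p4} : Set α).encard = 4 := by
  rw [Set.encard_insert_of_notMem (by simp [h12, h13, h14]),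
    Set.encard_insert_of_notMem (by simp [h23, h24]), Set.encard_pair h34]
  rfl

set_option maxHeartbeats 2000000 in
theorem consecutive_slabs_children_reflected_neighbors
    (a b c d : Fin 3 → ℝ) (hT : AffineIndependent ℝ ![a, b, c, d])
    (r s u : ℝ) (hrs : r < s) (hsu : s < u)
    (xA xA' xB' xC' xD' xD'' : Fin 4 → ℝ)
    (hA : xA = lift r a) (hA' : xA' = lift s a) (hB' : xB' = lift s b)
    (hC' : xC' = lift s c) (hD' : xD' = lift s d) (hD'' : xD'' = lift u d)
    (t t' : TP (Fin 4 → ℝ))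
    (ht : t = ⟨![xA, xD', xC', xB', xA'], 0⟩)
    (ht' : t' = ⟨![xD', xC', xB', xA', xD''], 0⟩) :
    t.child2 = ⟨![xA', t.mid, xB', xC', xD'], 1⟩ ∧
    t'.child1 = ⟨![xD', t'.mid, xC', xB', xA'], 1⟩ ∧
    ReflNbr t.child2 t'.child1 := by
  have hinj := hT.injective
  have hab : a ≠ b := fun h => by
    have : (0 : Fin 4) = 1 := hinj (by simpa using h); simp at this
  have hac : a ≠ c := fun h => by
    have : (0 : Fin 4) = 2 := hinj (by simpa using h); simp at this
  have had : a ≠ d := fun h => by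
    have : (0 : Fin 4) = 3 := hinj (by simpa using h); simp at this
  have hbc : b ≠ c := fun h => by
    have : (1 : Fin 4) = 2 := hinj (by simpa using h); simp at this
  have hbd : b ≠ d := fun h => by
    have : (1 : Fin 4) = 3 := hinj (by simpa using h); simp at this
  have hcd : c ≠ d := fun h => by
    have : (2 : Fin 4) = 3 := hinj (by simpa using h); simp at this
  have hmid : t.mid = lift ((r + s) / 2) a := by
    rw [ht]; show midpoint ℝ xA xA' = _
    rw [hA, hA']; exact midpoint_lift r s a
  have hmid' : t'.mid = lift ((s + u) / 2) d := by
    rw [ht']; show midpoint ℝ xD' xD'' = _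
    rw [hD', hD'']; exact midpoint_lift s u d
  have hc2 : t.child2 = ⟨![xA', t.mid, xB', xC', xD'], 1⟩ := by
    rw [TP.child2]
    congr 1
    · rw [if_pos (by rw [ht])]
      rw [ht]; rfl
    · rw [ht]; rfl
  have hc1 : t'.child1 = ⟨![xD', t'.mid, xC', xB', xA'], 1⟩ := by
    rw [TP.child1]
    congr 1
    · rw [ht']; rfl
    · rw [ht']; rfl
  refine ⟨hc2, hc1, ?_⟩
  rw [hc2, hc1]
  refine ⟨rfl, ?_, ?_⟩
  · show (Set.range ![xA', t.mid, xB', xC', xD'] ∩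
      Set.range ![xD', t'.mid, xC', xB', xA']).encard = 4
    have h1 : Set.range ![xA', t.mid, xB', xC', xD'] ∩
        Set.range ![xD', t'.mid, xC', xB', xA'] = {xA', xB', xC', xD'} := by
      rw [range5, range5]
      have hm1 : t.mid ≠ xD' := by rw [hmid, hD']; exact lift_ne_of_ne_t (by linarith)
      have hm2 : t.mid ≠ t'.mid := by rw [hmid, hmid']; exact lift_ne_of_ne_t (by linarith)
      have hm3 : t.mid ≠ xC' := by rw [hmid, hC']; exact lift_ne_of_ne_t (by linarith)
      have hm4 : t.mid ≠ xB' := by rw [hmid, hB']; exact lift_ne_of_ne_t (by linarith)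
      have hm5 : t.mid ≠ xA' := by rw [hmid, hA']; exact lift_ne_of_ne_t (by linarith)
      have hn1 : t'.mid ≠ xA' := by rw [hmid', hA']; exact lift_ne_of_ne_t (by linarith)
      have hn3 : t'.mid ≠ xB' := by rw [hmid', hB']; exact lift_ne_of_ne_t (by linarith)
      have hn4 : t'.mid ≠ xC' := by rw [hmid', hC']; exact lift_ne_of_ne_t (by linarith)
      have hn5 : t'.mid ≠ xD' := by rw [hmid', hD']; exact lift_ne_of_ne_t (by linarith)
      ext x
      simp only [Set.mem_inter_iff, Set.mem_insert_iff, Set.mem_singleton_iff]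
      constructor
      · rintro ⟨h1 | h1 | h1 | h1 | h1, h2 | h2 | h2 | h2 | h2⟩ <;> subst h1 <;>
          first
          | exact absurd h2 hm1 | exact absurd h2 hm2 | exact absurd h2 hm3
          | exact absurd h2 hm4 | exact absurd h2 hm5
          | exact absurd h2.symm hn1 | exact absurd h2.symm hn3
          | exact absurd h2.symm hn4 | exact absurd h2.symm hn5
          | tauto
      · rintro (h | h | h | h) <;> subst h <;> tauto
    rw [h1]
    exact encard4 (by rw [hA', hB']; exact lift_ne_of_ne_x hab)
      (by rw [hA', hC']; exact lift_ne_of_ne_x hac)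
      (by rw [hA', hD']; exact lift_ne_of_ne_x had)
      (by rw [hB', hC']; exact lift_ne_of_ne_x hbc)
      (by rw [hB', hD']; exact lift_ne_of_ne_x hbd)
      (by rw [hC', hD']; exact lift_ne_of_ne_x hcd)
  · refine Or.inr ⟨1, fun j hj => ?_⟩
    show (![xA', t.mid, xB', xC', xD'] ∘ refPerm 1) j = ![xD', t'.mid, xC', xB', xA'] j
    fin_cases j
    · rfl
    · exact absurd rfl hj
    · rfl
    · rfl
    · rfl
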